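/- (Bass identity for complete magnetic graphs) Let N ≥ 3, let M be any matrix of the uni-modular ensemble with phases Φ, and let Y(Φ) be the associated magnetic Hashimoto matrix of dimension N(N−1). Then for every η ∈ ℂ: det(η I_{N(N−1)} − Y(Φ)) = (η² − 1)^{N(N−3)/2} · det((η² + N − 2) I_N − η M). -/

import Mathlib

open MeasureTheory Matrix

noncomputable section

/-- The uniform probability measure on `[0, 2π)`. -/
def uniformPhase : Measure ℝ :=
  (ENNReal.ofReal (2 * Real.pi))⁻¹ • volume.restrict (Set.Ico 0 (2 * Real.pi))

/-- Product measure: the phases `ω μ ν` (used for `μ < ν`) are i.i.d. uniform on `[0, 2π)`. -/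
def phaseMeasure (N : ℕ) : Measure (Fin N → Fin N → ℝ) :=
  Measure.pi fun _ => Measure.pi fun _ => uniformPhase

/-- Antisymmetrized phases built from a raw sample: `φ ν μ = - φ μ ν`, `φ μ μ = 0`. -/
def phases (N : ℕ) (ω : Fin N → Fin N → ℝ) : Fin N → Fin N → ℝ :=
  fun μ ν => if μ < ν then ω μ ν else if ν < μ then - (ω ν μ) else 0

/-- The uni-modular matrix with phases `φ`: zero diagonal, `M μ ν = exp(i φ μ ν)` off diagonal. -/
def umeMatrix (N : ℕ) (φ : Fin N → Fin N → ℝ) : Matrix (Fin N) (Fin N) ℂ :=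
  fun μ ν => if μ = ν then 0 else Complex.exp (Complex.I * (φ μ ν : ℂ))


/-- A directed edge of the complete graph on `N` vertices: a pair `e = (j, i)` with `i ≠ j`;
its origin is `e.2` and its terminus is `e.1`. -/
abbrev DirEdge (N : ℕ) : Type := {e : Fin N × Fin N // e.1 ≠ e.2}

/-- The magnetic Hashimoto matrix of the complete graph on `N` vertices with phases `φ`:
`Y(Φ)_{e',e} = (δ_{o(e'),τ(e)} − δ_{e',ê}) · exp((i/2)(φ_e + φ_{e'}))`. -/
def hashimoto (N : ℕ) (φ : Fin N → Fin N → ℝ) :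
    Matrix (DirEdge N) (DirEdge N) ℂ :=
  fun e' e =>
    (((if e'.1.2 = e.1.1 then 1 else 0) : ℂ) - ((if e'.1 = (e.1.2, e.1.1) then 1 else 0) : ℂ)) *
      Complex.exp (Complex.I / 2 * ((φ e.1.1 e.1.2 : ℂ) + (φ e'.1.1 e'.1.2 : ℂ)))


open Polynomial

namespace BassAux
variable (N : ℕ) (φ : Fin N → Fin N → ℝ)
def PM : Matrix (Fin N) (DirEdge N) ℂ :=
  fun v e => if v = e.1.2 then Complex.exp (Complex.I / 2 * (φ e.1.1 e.1.2 : ℂ)) else 0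
def QM : Matrix (Fin N) (DirEdge N) ℂ :=
  fun v e => if v = e.1.1 then Complex.exp (Complex.I / 2 * (φ e.1.1 e.1.2 : ℂ)) else 0
def JM : Matrix (DirEdge N) (DirEdge N) ℂ :=
  fun e' e => if e'.1 = (e.1.2, e.1.1) then 1 else 0
def flip (e : DirEdge N) : DirEdge N := ⟨(e.1.2, e.1.1), e.2.symm⟩
variable {N φ}

lemma flip_flip (e : DirEdge N) : flip N (flip N e) = e := by
  simp [flip]

lemma JM_apply (e' e : DirEdge N) : JM N e' e = if e' = flip N e then 1 else 0 := by
  simp [JM, flip, Subtype.ext_iff]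

lemma JM_mul_JM : JM N * JM N = 1 := by
  ext e' e
  rw [Matrix.mul_apply]
  rw [Finset.sum_eq_single (flip N e)]
  · simp [JM_apply, flip_flip, Matrix.one_apply, eq_comm]
  · intro b _ hb
    rw [JM_apply, JM_apply]
    simp only [if_neg hb, mul_zero]
  · simp

lemma hashimoto_eq (hφ : ∀ μ ν, φ ν μ = - φ μ ν) :
    hashimoto N φ = (PM N φ)ᵀ * QM N φ - JM N := by
  ext e' e
  rw [Matrix.sub_apply, Matrix.mul_apply]
  have hsum : ∀ v ∈ Finset.univ, v ≠ e.1.1 → (PM N φ)ᵀ e' v * QM N φ v e = 0 := by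
    intro v _ hv
    simp [QM, hv]
  rw [Finset.sum_eq_single_of_mem e.1.1 (Finset.mem_univ _) hsum]
  by_cases hB : e'.1 = (e.1.2, e.1.1)
  · have hA : e'.1.2 = e.1.1 := by rw [hB]
    have hy : (φ e'.1.1 e'.1.2 : ℂ) = -(φ e.1.1 e.1.2 : ℂ) := by
      rw [hB]; push_cast [hφ e.1.1 e.1.2]; ring
    simp only [hashimoto, PM, QM, Matrix.transpose_apply, JM, if_pos hB, if_pos hA,
      if_pos hA.symm, eq_self_iff_true, if_true, hy]
    rw [← Complex.exp_add]
    have : Complex.I / 2 * -(φ (e.1).1 (e.1).2 : ℂ) + Complex.I / 2 * (φ (e.1).1 (e.1).2 : ℂ) = 0 := by ring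
    rw [this, Complex.exp_zero]
    ring
  · simp only [hashimoto, PM, QM, Matrix.transpose_apply, JM, if_neg hB, if_pos rfl]
    by_cases hA : e'.1.2 = e.1.1
    · simp only [if_pos hA, if_pos hA.symm, eq_self_iff_true, if_true, ← Complex.exp_add]
      ring_nf
    · simp only [if_neg hA, if_neg (Ne.symm hA)]
      ring


lemma QM_mul_PMT (hφ : ∀ μ ν, φ ν μ = - φ μ ν) :
    QM N φ * (PM N φ)ᵀ = umeMatrix N φ := by
  ext u v
  rw [Matrix.mul_apply]
  by_cases huv : u = v
  · subst huv
    rw [Finset.sum_eq_zero, umeMatrix, if_pos rfl]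
    intro e _
    simp only [QM, PM, Matrix.transpose_apply]
    by_cases h1 : u = e.1.1
    · rw [if_neg (show ¬ u = e.1.2 from fun h2 => e.2 (h1.symm.trans h2)), mul_zero]
    · rw [if_neg h1, zero_mul]
  · rw [Finset.sum_eq_single_of_mem (⟨(u, v), huv⟩ : DirEdge N) (Finset.mem_univ _)]
    · simp only [QM, PM, Matrix.transpose_apply, umeMatrix, if_neg huv, eq_self_iff_true, if_true,
        ← Complex.exp_add]
      ring_nf
    · intro e _ he
      simp only [QM, PM, Matrix.transpose_apply]
      by_cases h1 : u = e.1.1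
      · rw [if_neg (show ¬ v = e.1.2 from fun h2 => he (Subtype.ext (Prod.ext_iff.mpr ⟨h1.symm, h2.symm⟩))), mul_zero]
      · rw [if_neg h1, zero_mul]

lemma QM_mul_JM_mul_PMT (hφ : ∀ μ ν, φ ν μ = - φ μ ν) :
    QM N φ * JM N * (PM N φ)ᵀ = ((N : ℂ) - 1) • 1 := by
  have hQJ : QM N φ * JM N = fun u e => if u = e.1.2 then Complex.exp (Complex.I / 2 * (φ e.1.2 e.1.1 : ℂ)) else 0 := by
    ext u e
    rw [Matrix.mul_apply, Finset.sum_eq_single_of_mem (flip N e) (Finset.mem_univ _)]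
    · simp [QM, JM, flip]
      rfl
    · intro b _ hb
      rw [JM, if_neg, mul_zero]
      intro h; exact hb (Subtype.ext h)
  rw [hQJ]
  ext u v
  show ∑ e : DirEdge N, (fun u e => if u = e.1.2 then Complex.exp (Complex.I / 2 * (φ e.1.2 e.1.1 : ℂ)) else 0) u e * (PM N φ)ᵀ e v = (((N : ℂ) - 1) • (1 : Matrix (Fin N) (Fin N) ℂ)) u v
  by_cases huv : u = v
  · subst huv
    have : ∀ e : DirEdge N, (fun u e => if u = e.1.2 then Complex.exp (Complex.I / 2 * (φ e.1.2 e.1.1 : ℂ)) else 0) u e * (PM N φ)ᵀ e u = if u = e.1.2 then 1 else 0 := by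
      intro e
      simp only [PM, Matrix.transpose_apply]
      by_cases h : u = e.1.2
      · rw [if_pos h, if_pos h, if_pos h, ← Complex.exp_add]
        have hy : (φ e.1.2 e.1.1 : ℂ) = -(φ e.1.1 e.1.2 : ℂ) := by
          push_cast [hφ e.1.1 e.1.2]; ring
        rw [hy]
        have : Complex.I / 2 * -(φ (e.1).1 (e.1).2 : ℂ) + Complex.I / 2 * (φ (e.1).1 (e.1).2 : ℂ) = 0 := by ring
        rw [this, Complex.exp_zero]
      · rw [if_neg h, if_neg h, zero_mul, if_neg h]
    rw [Finset.sum_congr rfl (fun e _ => this e)]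
    have hcount : (∑ e : DirEdge N, if u = e.1.2 then (1:ℂ) else 0) = (N : ℂ) - 1 := by
      rw [← Finset.sum_subtype (Finset.univ.filter (fun p : Fin N × Fin N => p.1 ≠ p.2))
        (by simp) (fun p : Fin N × Fin N => if u = p.2 then (1:ℂ) else 0)]
      rw [Finset.sum_filter, Fintype.sum_prod_type]
      have hinner : ∀ j : Fin N, (∑ i : Fin N, if j ≠ i then (if u = i then (1:ℂ) else 0) else 0)
          = if j ≠ u then (1:ℂ) else 0 := by
        intro j
        rw [Finset.sum_eq_single_of_mem u (Finset.mem_univ _)]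
        · by_cases h : j ≠ u <;> simp [h]
        · intro i _ hi
          by_cases h : j ≠ i <;> simp [h, Ne.symm hi]
      rw [Finset.sum_congr rfl (fun j _ => hinner j), Finset.sum_boole]
      have : (Finset.univ.filter (fun j : Fin N => j ≠ u)).card = N - 1 := by
        rw [Finset.filter_ne', Finset.card_erase_of_mem (Finset.mem_univ _)]
        simp
      rw [this]
      have h1 : 1 ≤ N := Fin.pos u
      push_cast [Nat.cast_sub h1]
      ring
    rw [hcount]
    simp [Matrix.smul_apply, Matrix.one_apply]
  · rw [Finset.sum_eq_zero]
    · simp [Matrix.smul_apply, Matrix.one_apply, huv]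
    · intro e _
      simp only [PM, Matrix.transpose_apply]
      by_cases h : u = e.1.2
      · rw [if_neg (show ¬ v = e.1.2 from fun h2 => huv (h.trans h2.symm)), mul_zero]
      · rw [if_neg h, zero_mul]


lemma card_dirEdge : Fintype.card (DirEdge N) = N * N - N := by
  rw [Fintype.card_subtype]
  have h : (Finset.univ.filter (fun e : Fin N × Fin N => e.1 ≠ e.2)) = Finset.univ.offDiag := by
    ext p; simp [Finset.mem_offDiag]
  rw [h, Finset.offDiag_card]
  simp

variable (N) in
def DS : Matrix (DirEdge N) (DirEdge N) ℂ :=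
  Matrix.diagonal (fun e => if e.1.1 < e.1.2 then 1 else -1)

lemma DS_mul_DS : DS N * DS N = 1 := by
  rw [DS, Matrix.diagonal_mul_diagonal]
  have : (fun e : DirEdge N => (if e.1.1 < e.1.2 then (1:ℂ) else -1) * (if e.1.1 < e.1.2 then 1 else -1)) = fun _ => 1 := by
    funext e; by_cases h : e.1.1 < e.1.2 <;> simp [h]
  rw [this, Matrix.diagonal_one]

lemma JM_apply' (e' e : DirEdge N) : JM N e' e = if e' = flip N e then 1 else 0 := by
  simp [JM, flip, Subtype.ext_iff]

lemma DS_mul_JM_mul_DS : DS N * JM N * DS N = -(JM N) := by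
  ext e' e
  rw [DS, Matrix.mul_diagonal, Matrix.diagonal_mul, Matrix.neg_apply, JM_apply']
  by_cases h : e' = flip N e
  · subst h
    rw [if_pos rfl]
    rcases e.2.lt_or_gt with h2 | h2 <;> simp [flip, h2, asymm h2]
  · simp [h]

lemma det_eta_sub_JM (η : ℂ) :
    (η • (1 : Matrix (DirEdge N) (DirEdge N) ℂ) - JM N).det
      = (η • (1 : Matrix (DirEdge N) (DirEdge N) ℂ) + JM N).det := by
  have h : η • (1 : Matrix (DirEdge N) (DirEdge N) ℂ) - JM N
      = DS N * (η • (1 : Matrix (DirEdge N) (DirEdge N) ℂ) + JM N) * DS N := by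
    rw [Matrix.mul_add, Matrix.add_mul, DS_mul_JM_mul_DS, Matrix.mul_smul, Matrix.smul_mul,
      mul_one, DS_mul_DS]
    abel
  rw [h, Matrix.det_mul, Matrix.det_mul]
  have hdd : (DS N).det * (DS N).det = 1 := by
    rw [← Matrix.det_mul, DS_mul_DS, Matrix.det_one]
  calc (DS N).det * (η • (1 : Matrix (DirEdge N) (DirEdge N) ℂ) + JM N).det * (DS N).det
      = ((DS N).det * (DS N).det) * (η • (1 : Matrix (DirEdge N) (DirEdge N) ℂ) + JM N).det := by ring
    _ = _ := by rw [hdd, one_mul]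

lemma eval_det {ι : Type*} [Fintype ι] [DecidableEq ι] (A : Matrix ι ι (Polynomial ℂ)) (x : ℂ) :
    (A.det).eval x = (A.map (Polynomial.eval x)).det := by
  have := RingHom.map_det (Polynomial.evalRingHom x) A
  simpa using this

lemma nat_fact (hN : 3 ≤ N) :
    2 * (N * (N - 1) / 2) = N * N - N ∧ N * (N - 1) / 2 = N * (N - 3) / 2 + N := by
  obtain ⟨n, rfl⟩ : ∃ n, N = n + 3 := ⟨N - 3, by omega⟩
  obtain ⟨k, hk⟩ : ∃ k, n * (n + 3) = 2 * k := by
    rcases Nat.even_or_odd n with h | h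
    · obtain ⟨r, hr⟩ := h; exact ⟨r * (n + 3), by rw [hr]; ring⟩
    · obtain ⟨r, hr⟩ := h; exact ⟨(2 * r + 1) * (r + 2), by rw [hr]; ring⟩
  have h1 : (n + 3) * ((n + 3) - 1) = 2 * k + 2 * n + 6 := by
    rw [show n + 3 - 1 = n + 2 from rfl, ← hk]; ring
  have h2 : (n + 3) * ((n + 3) - 3) = 2 * k := by
    rw [show n + 3 - 3 = n from rfl, ← hk]; ring
  have h3 : (n + 3) * (n + 3) = 2 * k + 3 * n + 9 := by rw [← hk]; ring
  omega


open Polynomial in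
lemma det_eta_add_JM (hN : 3 ≤ N) (η : ℂ) :
    (η • (1 : Matrix (DirEdge N) (DirEdge N) ℂ) + JM N).det = (η ^ 2 - 1) ^ (N * (N - 1) / 2) := by
  set p : ℂ[X] := (-(JM N)).charpoly with hp
  have hevalp : ∀ x : ℂ, p.eval x = (x • (1 : Matrix (DirEdge N) (DirEdge N) ℂ) + JM N).det := by
    intro x
    rw [hp, Matrix.charpoly, eval_det]
    congr 1
    ext i j
    by_cases h : i = j <;>
      simp [charmatrix_apply, h, Matrix.one_apply, Matrix.smul_apply, Matrix.diagonal_apply]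
  set q : ℂ[X] := ((X : ℂ[X]) ^ 2 - 1) ^ (N * (N - 1) / 2) with hq
  have hqmonic : q.Monic := by
    have : ((X : ℂ[X]) ^ 2 - 1) = (X : ℂ[X]) ^ 2 - C 1 := by simp
    exact (this ▸ (monic_X_pow_sub_C (1 : ℂ) two_ne_zero)).pow _
  have hqe : ∀ x : ℂ, q.eval x = (x ^ 2 - 1) ^ (N * (N - 1) / 2) := by
    intro x; simp [hq]
  have hpq : p * p = q * q := by
    apply Polynomial.funext
    intro x
    rw [Polynomial.eval_mul, Polynomial.eval_mul, hevalp, hqe]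
    nth_rewrite 1 [← det_eta_sub_JM]
    rw [← Matrix.det_mul]
    have hprod : (x • (1 : Matrix (DirEdge N) (DirEdge N) ℂ) - JM N) *
        (x • (1 : Matrix (DirEdge N) (DirEdge N) ℂ) + JM N) = (x ^ 2 - 1) • 1 := by
      simp only [Matrix.sub_mul, Matrix.mul_add, Matrix.smul_mul, Matrix.mul_smul, JM_mul_JM,
        one_mul, mul_one, smul_smul, sub_smul, one_smul, pow_two, smul_add, smul_neg, neg_smul]
      module
    rw [hprod, Matrix.det_smul, Matrix.det_one, mul_one, card_dirEdge, ← (nat_fact hN).1,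
      two_mul, pow_add]
  have hpmonic : p.Monic := Matrix.charpoly_monic _
  have hz : (p - q) * (p + q) = 0 := by linear_combination hpq
  rcases mul_eq_zero.mp hz with h | h
  · rw [← hevalp η, sub_eq_zero.mp h, hqe]
  · exfalso
    have hpneg : p = -q := eq_neg_of_add_eq_zero_left h
    have hc := hpmonic.leadingCoeff
    rw [hpneg, Polynomial.leadingCoeff_neg, hqmonic.leadingCoeff] at hc
    norm_num at hc


lemma add_mul_sub_JM (x : ℂ) :
    (x • (1 : Matrix (DirEdge N) (DirEdge N) ℂ) + JM N) *
      (x • (1 : Matrix (DirEdge N) (DirEdge N) ℂ) - JM N) = (x ^ 2 - 1) • 1 := by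
  simp only [Matrix.add_mul, Matrix.mul_sub, Matrix.smul_mul, Matrix.mul_smul, JM_mul_JM,
    one_mul, mul_one, smul_smul, sub_smul, one_smul, pow_two, smul_add, smul_neg, neg_smul,
    smul_sub]
  module

lemma main_case (hN : 3 ≤ N) (hφ : ∀ μ ν, φ ν μ = - φ μ ν) (η : ℂ) (hη : η ^ 2 - 1 ≠ 0) :
    (η • (1 : Matrix (DirEdge N) (DirEdge N) ℂ) - hashimoto N φ).det
      = (η ^ 2 - 1) ^ (N * (N - 3) / 2) *
        ((η ^ 2 + (N : ℂ) - 2) • (1 : Matrix (Fin N) (Fin N) ℂ) - η • umeMatrix N φ).det := by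
  set P := PM N φ with hP
  set Q := QM N φ with hQ
  set J := JM N with hJ
  set M := umeMatrix N φ with hM
  set c : ℂ := (η ^ 2 - 1)⁻¹ with hc
  set D' : Matrix (DirEdge N) (DirEdge N) ℂ := c • (η • 1 - J) with hD'
  have h0 : η • (1 : Matrix (DirEdge N) (DirEdge N) ℂ) - hashimoto N φ
      = (η • 1 + J) - Pᵀ * Q := by
    rw [hashimoto_eq hφ, ← hP, ← hQ, ← hJ]; abel
  have hinv : (η • (1 : Matrix (DirEdge N) (DirEdge N) ℂ) + J) * D' = 1 := by
    rw [hD', Matrix.mul_smul, add_mul_sub_JM, smul_smul, hc, inv_mul_cancel₀ hη, one_smul]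
  have h1 : (η • (1 : Matrix (DirEdge N) (DirEdge N) ℂ) + J) - Pᵀ * Q
      = (η • 1 + J) * (1 - D' * (Pᵀ * Q)) := by
    rw [Matrix.mul_sub, mul_one, ← Matrix.mul_assoc, hinv, Matrix.one_mul]
  rw [h0, h1, Matrix.det_mul, det_eta_add_JM hN]
  have h2 : (1 : Matrix (DirEdge N) (DirEdge N) ℂ) - D' * (Pᵀ * Q)
      = 1 + (-(D' * Pᵀ)) * Q := by
    rw [Matrix.neg_mul, Matrix.mul_assoc, sub_eq_add_neg]
  rw [h2, Matrix.det_one_add_mul_comm]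
  have h3 : (1 : Matrix (Fin N) (Fin N) ℂ) + Q * (-(D' * Pᵀ)) = 1 - Q * D' * Pᵀ := by
    rw [Matrix.mul_neg, ← Matrix.mul_assoc, sub_eq_add_neg]
  rw [h3]
  have hQDP : Q * D' * Pᵀ = c • (η • M - ((N : ℂ) - 1) • 1) := by
    rw [hD', Matrix.mul_smul, Matrix.smul_mul]
    congr 1
    rw [Matrix.mul_sub, Matrix.mul_smul, Matrix.mul_one, Matrix.sub_mul, Matrix.smul_mul,
      hP, hQ, hJ, QM_mul_PMT hφ, QM_mul_JM_mul_PMT hφ, ← hM]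
  have h4 : (1 : Matrix (Fin N) (Fin N) ℂ) - Q * D' * Pᵀ
      = c • ((η ^ 2 + (N : ℂ) - 2) • (1 : Matrix (Fin N) (Fin N) ℂ) - η • M) := by
    rw [hQDP]
    have key : (η ^ 2 + (N : ℂ) - 2) • (1 : Matrix (Fin N) (Fin N) ℂ) - η • M
        = (η ^ 2 - 1) • (1 : Matrix (Fin N) (Fin N) ℂ) - (η • M - ((N : ℂ) - 1) • 1) := by
      module
    have h4b : c • ((η ^ 2 - 1) • (1 : Matrix (Fin N) (Fin N) ℂ) - (η • M - ((N : ℂ) - 1) • 1))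
        = 1 - c • (η • M - ((N : ℂ) - 1) • 1) := by
      rw [smul_sub, smul_smul, hc, inv_mul_cancel₀ hη, one_smul]
    rw [key, h4b]
  rw [h4, Matrix.det_smul, Fintype.card_fin]
  have hcancel : (η ^ 2 - 1) ^ N * c ^ N = 1 := by
    rw [hc, ← mul_pow, mul_inv_cancel₀ hη, one_pow]
  rw [(nat_fact hN).2, pow_add]
  linear_combination ((η ^ 2 - 1) ^ (N * (N - 3) / 2) *
    ((η ^ 2 + (N : ℂ) - 2) • (1 : Matrix (Fin N) (Fin N) ℂ) - η • M).det) * hcancel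

end BassAux

/-- Bass identity for complete magnetic graphs: for `N ≥ 3`, any antisymmetric
phases `Φ`, and every `η ∈ ℂ`,
`det(η I − Y(Φ)) = (η² − 1)^{N(N−3)/2} · det((η² + N − 2) I − η M)`. -/
theorem bass_identity (N : ℕ) (hN : 3 ≤ N) (φ : Fin N → Fin N → ℝ)
    (hφ : ∀ μ ν, φ ν μ = - φ μ ν) (η : ℂ) :
    (η • (1 : Matrix (DirEdge N) (DirEdge N) ℂ) - hashimoto N φ).det
      = (η ^ 2 - 1) ^ (N * (N - 3) / 2) *
        ((η ^ 2 + (N : ℂ) - 2) • (1 : Matrix (Fin N) (Fin N) ℂ) - η • umeMatrix N φ).det := by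
  classical
  set Pf : ℂ[X] := (hashimoto N φ).charpoly with hPf
  set Pg : ℂ[X] := ((X : ℂ[X]) ^ 2 - 1) ^ (N * (N - 3) / 2) *
    (((X : ℂ[X]) ^ 2 + C ((N : ℂ) - 2)) • (1 : Matrix (Fin N) (Fin N) ℂ[X])
      - (X : ℂ[X]) • (umeMatrix N φ).map C).det with hPg
  have hf : ∀ x : ℂ, Pf.eval x
      = (x • (1 : Matrix (DirEdge N) (DirEdge N) ℂ) - hashimoto N φ).det := by
    intro x
    rw [hPf, Matrix.charpoly, BassAux.eval_det]
    congr 1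
    ext i j
    by_cases h : i = j <;>
      simp [charmatrix_apply, h, Matrix.one_apply, Matrix.diagonal_apply]
  have hg : ∀ x : ℂ, Pg.eval x = (x ^ 2 - 1) ^ (N * (N - 3) / 2) *
      ((x ^ 2 + (N : ℂ) - 2) • (1 : Matrix (Fin N) (Fin N) ℂ) - x • umeMatrix N φ).det := by
    intro x
    rw [hPg, Polynomial.eval_mul, BassAux.eval_det]
    congr 1
    · simp
    · congr 1
      ext i j
      by_cases h : i = j <;>
        simp [Matrix.smul_apply, Matrix.one_apply, Matrix.map_apply, h] <;> ring
  have hfin : ({x : ℂ | x ^ 2 - 1 = 0}).Finite := by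
    apply Set.Finite.subset ((Set.finite_singleton (-1 : ℂ)).insert 1)
    intro x hx
    have hx' : (x - 1) * (x + 1) = 0 := by
      have : x ^ 2 - 1 = 0 := hx
      linear_combination this
    rcases mul_eq_zero.mp hx' with h | h
    · exact Set.mem_insert_iff.mpr (Or.inl (sub_eq_zero.mp h))
    · exact Set.mem_insert_iff.mpr (Or.inr (by
        simp only [Set.mem_singleton_iff]
        exact eq_neg_of_add_eq_zero_left h))
  have hinf : ({x : ℂ | Pf.eval x = Pg.eval x}).Infinite := by
    apply Set.Infinite.mono _ hfin.infinite_compl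
    intro x hx
    have hη : x ^ 2 - 1 ≠ 0 := hx
    show Pf.eval x = Pg.eval x
    rw [hf x, hg x]
    exact BassAux.main_case hN hφ x hη
  have hPfg : Pf = Pg := Polynomial.eq_of_infinite_eval_eq _ _ hinf
  calc (η • (1 : Matrix (DirEdge N) (DirEdge N) ℂ) - hashimoto N φ).det
      = Pf.eval η := (hf η).symm
    _ = Pg.eval η := by rw [hPfg]
    _ = _ := hg η
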